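/- (Main theorem, LE architecture, upper bound.) Let N, D ≥ 1 and let f : ℝ^{N×D} → ℝ be a continuous permutation-invariant function, i.e., f(σ·X) = f(X) for every X ∈ ℝ^{N×D} and every permutation σ of {1,…,N}, where (σ·X)^{(n)} = x^{(σ(n))}. Then there exist a natural number L ≤ N⁴D², vectors v_1,…,v_L ∈ ℝ^D, and a function ρ : ℝ^L → ℝ such that, defining φ : ℝ^D → ℝ^L by φ(x) = (exp(⟨v_1, x⟩), …, exp(⟨v_L, x⟩)) and Φ(X) = Σ_{n=1}^N φ(x^{(n)}), one has f(X) = ρ(Φ(X)) for every X ∈ ℝ^{N×D}, and ρ is continuous on the range {Φ(X) : X ∈ ℝ^{N×D}} ⊆ ℝ^L. -/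

import Mathlib

open Polynomial in
lemma DS.multiset_eq_of_esymm_eq {R : Type*} [CommRing R] [IsDomain R]
    (s t : Multiset R) (n : ℕ) (hs : Multiset.card s = n) (ht : Multiset.card t = n)
    (h : ∀ k ≤ n, s.esymm k = t.esymm k) : s = t := by
  have hprod : (s.map fun a => X - C a).prod = (t.map fun a => X - C a).prod := by
    apply Polynomial.ext
    intro k
    rcases le_or_gt k n with hk | hk
    · rw [Multiset.prod_X_sub_C_coeff s (by rw [hs]; exact hk),
        Multiset.prod_X_sub_C_coeff t (by rw [ht]; exact hk), hs, ht,
        h _ (Nat.sub_le _ _)]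
    · rw [Polynomial.coeff_eq_zero_of_natDegree_lt, Polynomial.coeff_eq_zero_of_natDegree_lt]
      · rw [Polynomial.natDegree_multiset_prod_X_sub_C_eq_card, ht]; exact hk
      · rw [Polynomial.natDegree_multiset_prod_X_sub_C_eq_card, hs]; exact hk
  have h2 := congrArg Polynomial.roots hprod
  rwa [roots_multiset_prod_X_sub_C, roots_multiset_prod_X_sub_C] at h2

lemma DS.esymm_map_hom {R S : Type*} [CommSemiring R] [CommSemiring S] (g : R →+* S)
    (s : Multiset R) (k : ℕ) : (s.map g).esymm k = g (s.esymm k) := by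
  simp only [Multiset.esymm, Multiset.powersetCard_map, Multiset.map_map, Function.comp]
  rw [map_multiset_sum, Multiset.map_map]
  apply congrArg
  apply Multiset.map_congr rfl
  intro t _
  exact Multiset.prod_hom t g


lemma DS.newton (N : ℕ) (x : Fin N → ℝ) (k : ℕ) :
    (k : ℝ) * (Finset.univ.val.map x).esymm k =
      (-1) ^ (k + 1) * ∑ a ∈ (Finset.HasAntidiagonal.antidiagonal k).filter (fun a => a.1 < k),
        (-1 : ℝ) ^ a.1 * (Finset.univ.val.map x).esymm a.1 * ∑ i, x i ^ a.2 := by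
  have h := congrArg (MvPolynomial.aeval x) (MvPolynomial.mul_esymm_eq_sum (Fin N) ℝ k)
  simp only [map_mul, map_sum, map_pow, MvPolynomial.aeval_esymm_eq_multiset_esymm] at h
  simpa [MvPolynomial.aeval_esymm_eq_multiset_esymm, MvPolynomial.psum, map_sum, map_pow,
    MvPolynomial.aeval_X, mul_assoc] using h

lemma DS.multiset_eq_of_psum_eq (N : ℕ) (x y : Fin N → ℝ)
    (h : ∀ k, 1 ≤ k → k ≤ N → ∑ i, x i ^ k = ∑ i, y i ^ k) :
    Finset.univ.val.map x = Finset.univ.val.map y := by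
  have hesymm : ∀ k, k ≤ N → (Finset.univ.val.map x).esymm k = (Finset.univ.val.map y).esymm k := by
    intro k
    induction k using Nat.strong_induction_on with
    | _ k ih =>
      intro hkN
      rcases Nat.eq_zero_or_pos k with rfl | hk
      · simp [Multiset.esymm]
      · have hkR : (k : ℝ) ≠ 0 := Nat.cast_ne_zero.mpr hk.ne'
        apply mul_left_cancel₀ hkR
        rw [DS.newton N x k, DS.newton N y k]
        congr 1
        apply Finset.sum_congr rfl
        intro a ha
        simp only [Finset.mem_filter, Finset.HasAntidiagonal.mem_antidiagonal] at ha
        have h1 : a.1 ≤ N := le_trans (le_of_lt ha.2) hkN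
        have h2 : 1 ≤ a.2 := by omega
        have h3 : a.2 ≤ N := by omega
        rw [ih a.1 ha.2 h1, h a.2 h2 h3]
  exact DS.multiset_eq_of_esymm_eq _ _ N (by simp) (by simp) hesymm


lemma DS.univ_val_map_perm {n : ℕ} (σ : Equiv.Perm (Fin n)) :
    Multiset.map σ Finset.univ.val = Finset.univ.val := by
  have h : (Finset.univ.map σ.toEmbedding) = Finset.univ := Finset.map_univ_equiv σ
  have := congrArg Finset.val h
  simpa [Finset.map] using this

lemma DS.map_split {α : Type*} {N : ℕ} (z : Fin (N + 1) → α) :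
    Multiset.map z Finset.univ.val = z 0 ::ₘ Multiset.map (z ∘ Fin.succ) Finset.univ.val := by
  rw [Fin.univ_succ, Finset.cons_val, Multiset.map_cons, Finset.map_val, Multiset.map_map]
  rfl

lemma DS.exists_perm_of_map_eq {α : Type*} : ∀ {N : ℕ} (x y : Fin N → α),
    Multiset.map x Finset.univ.val = Multiset.map y Finset.univ.val →
    ∃ σ : Equiv.Perm (Fin N), ∀ i, x i = y (σ i) := by
  intro N
  induction N with
  | zero => exact fun x y _ => ⟨1, fun i => i.elim0⟩
  | succ N ih =>
    intro x y h
    have h0 : x 0 ∈ Multiset.map y Finset.univ.val := by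
      rw [← h]
      exact Multiset.mem_map_of_mem x (Finset.mem_univ_val 0)
    obtain ⟨j, -, hj⟩ := Multiset.mem_map.mp h0
    set y' : Fin (N + 1) → α := y ∘ (Equiv.swap 0 j) with hy'def
    have hy' : Multiset.map y' Finset.univ.val = Multiset.map y Finset.univ.val := by
      calc Multiset.map y' Finset.univ.val
          = Multiset.map y (Multiset.map (Equiv.swap 0 j) Finset.univ.val) := by
            rw [Multiset.map_map]
        _ = Multiset.map y Finset.univ.val := by rw [DS.univ_val_map_perm]
    have key : Multiset.map (x ∘ Fin.succ) Finset.univ.val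
        = Multiset.map (y' ∘ Fin.succ) Finset.univ.val := by
      have h2 := h.trans hy'.symm
      rw [DS.map_split x, DS.map_split y'] at h2
      have hy'0 : y' 0 = x 0 := by simp [hy'def, Equiv.swap_apply_left, hj]
      rw [hy'0] at h2
      exact (Multiset.cons_inj_right _).mp h2
    obtain ⟨σ', hσ'⟩ := ih (x ∘ Fin.succ) (y' ∘ Fin.succ) key
    refine ⟨(Equiv.Perm.decomposeFin.symm (0, σ')).trans (Equiv.swap 0 j), fun i => ?_⟩
    refine Fin.cases ?_ (fun i => ?_) i
    · simp [hj.symm]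
    · have := hσ' i
      simp only [Function.comp_apply] at this
      simpa [hy'def, Equiv.Perm.decomposeFin_symm_apply_succ] using this

open Polynomial

noncomputable def DS.Q (D : ℕ) (w : Fin D → ℝ) : Polynomial ℝ :=
  ∑ d : Fin D, Polynomial.C (w d) * Polynomial.X ^ (d : ℕ)

lemma DS.Q_coeff (D : ℕ) (w : Fin D → ℝ) (d : Fin D) : (DS.Q D w).coeff (d : ℕ) = w d := by
  rw [DS.Q, Polynomial.finset_sum_coeff, Finset.sum_eq_single d]
  · simp
  · intro b _ hb
    have : ¬((d : ℕ) = (b : ℕ)) := fun hd => hb (Fin.val_injective hd).symm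
    simp [Polynomial.coeff_C_mul, Polynomial.coeff_X_pow, this]
  · simp

lemma DS.Q_inj (D : ℕ) : Function.Injective (DS.Q D) := by
  intro w w' h
  funext d
  rw [← DS.Q_coeff D w d, ← DS.Q_coeff D w' d, h]

lemma DS.Q_eval (D : ℕ) (w : Fin D → ℝ) (r : ℝ) :
    (DS.Q D w).eval r = ∑ d : Fin D, w d * r ^ (d : ℕ) := by
  rw [DS.Q, Polynomial.eval_finset_sum]
  simp

lemma DS.Q_natDegree (D : ℕ) (w : Fin D → ℝ) : (DS.Q D w).natDegree ≤ D - 1 := by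
  apply Polynomial.natDegree_sum_le_of_forall_le
  intro d _
  exact le_trans (Polynomial.natDegree_C_mul_X_pow_le _ _) (by omega)

lemma DS.natDegree_msum_le {n : ℕ} (l : Multiset (Polynomial ℝ))
    (h : ∀ p ∈ l, Polynomial.natDegree p ≤ n) : l.sum.natDegree ≤ n := by
  induction l using Multiset.induction with
  | empty => simp
  | cons a s ih =>
    rw [Multiset.sum_cons]
    exact le_trans (Polynomial.natDegree_add_le _ _)
      (max_le (h a (Multiset.mem_cons_self _ _)) (ih fun p hp => h p (Multiset.mem_cons_of_mem hp)))

lemma DS.esymm_natDegree_le (l : Multiset (Polynomial ℝ)) (k B : ℕ)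
    (h : ∀ p ∈ l, Polynomial.natDegree p ≤ B) :
    (l.esymm k).natDegree ≤ k * B := by
  rw [Multiset.esymm]
  apply DS.natDegree_msum_le
  intro p hp
  obtain ⟨t, ht, rfl⟩ := Multiset.mem_map.mp hp
  obtain ⟨hle, hcard⟩ := Multiset.mem_powersetCard.mp ht
  refine le_trans (Polynomial.natDegree_multiset_prod_le t) ?_
  have : ∀ x ∈ t.map Polynomial.natDegree, x ≤ B := by
    intro x hx
    obtain ⟨q, hq, rfl⟩ := Multiset.mem_map.mp hx
    exact h q (Multiset.mem_of_le hle hq)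
  calc (t.map Polynomial.natDegree).sum ≤ Multiset.card (t.map Polynomial.natDegree) • B :=
        Multiset.sum_le_card_nsmul _ _ this
    _ = k * B := by rw [Multiset.card_map, hcard, smul_eq_mul]

/-- If the multisets of projections `∑ d, x n d * j^d` agree for `j = 0, …, m-1` with
`m = N*(D-1)+1`, then the multisets of rows agree. -/
lemma DS.proj_multiset_eq (N D : ℕ) (x y : Fin N → Fin D → ℝ)
    (h : ∀ j : Fin (N * (D - 1) + 1),
      Multiset.map (fun n => ∑ d : Fin D, x n d * ((j : ℕ) : ℝ) ^ (d : ℕ)) Finset.univ.val =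
      Multiset.map (fun n => ∑ d : Fin D, y n d * ((j : ℕ) : ℝ) ^ (d : ℕ)) Finset.univ.val) :
    Multiset.map x Finset.univ.val = Multiset.map y Finset.univ.val := by
  set m := N * (D - 1) + 1 with hm
  set Mx := Multiset.map (fun n => DS.Q D (x n)) Finset.univ.val with hMx
  set My := Multiset.map (fun n => DS.Q D (y n)) Finset.univ.val with hMy
  have hdeg : ∀ p ∈ Mx, p.natDegree ≤ D - 1 := by
    intro p hp; obtain ⟨n, -, rfl⟩ := Multiset.mem_map.mp hp; exact DS.Q_natDegree D (x n)
  have hdegy : ∀ p ∈ My, p.natDegree ≤ D - 1 := by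
    intro p hp; obtain ⟨n, -, rfl⟩ := Multiset.mem_map.mp hp; exact DS.Q_natDegree D (y n)
  have hMeq : Mx = My := by
    apply DS.multiset_eq_of_esymm_eq Mx My N (by simp [hMx]) (by simp [hMy])
    intro k hk
    have hzero : Mx.esymm k - My.esymm k = 0 := by
      apply Polynomial.eq_zero_of_natDegree_lt_card_of_eval_eq_zero _
        (f := fun j : Fin m => (j : ℝ))
        (fun a b hab => Fin.val_injective (Nat.cast_injective hab))
      · intro j
        have hx1 : (Mx.map (Polynomial.evalRingHom ((j : ℕ) : ℝ))).esymm k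
            = Polynomial.eval ((j : ℕ) : ℝ) (Mx.esymm k) :=
          DS.esymm_map_hom (Polynomial.evalRingHom _) Mx k
        have hy1 : (My.map (Polynomial.evalRingHom ((j : ℕ) : ℝ))).esymm k
            = Polynomial.eval ((j : ℕ) : ℝ) (My.esymm k) :=
          DS.esymm_map_hom (Polynomial.evalRingHom _) My k
        have hx2 : Mx.map (Polynomial.evalRingHom ((j : ℕ) : ℝ))
            = Multiset.map (fun n => ∑ d : Fin D, x n d * ((j : ℕ) : ℝ) ^ (d : ℕ)) Finset.univ.val := by
          rw [hMx, Multiset.map_map]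
          apply Multiset.map_congr rfl
          intro n _
          simp [DS.Q_eval]
        have hy2 : My.map (Polynomial.evalRingHom ((j : ℕ) : ℝ))
            = Multiset.map (fun n => ∑ d : Fin D, y n d * ((j : ℕ) : ℝ) ^ (d : ℕ)) Finset.univ.val := by
          rw [hMy, Multiset.map_map]
          apply Multiset.map_congr rfl
          intro n _
          simp [DS.Q_eval]
        rw [Polynomial.eval_sub, ← hx1, ← hy1, hx2, hy2, h j, sub_self]
      · have h1 : (Mx.esymm k).natDegree ≤ k * (D - 1) := DS.esymm_natDegree_le _ _ _ hdeg
        have h2 : (My.esymm k).natDegree ≤ k * (D - 1) := DS.esymm_natDegree_le _ _ _ hdegy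
        have hkD : k * (D - 1) ≤ N * (D - 1) := Nat.mul_le_mul_right _ hk
        have := Polynomial.natDegree_sub_le (Mx.esymm k) (My.esymm k)
        simp only [Fintype.card_fin]
        omega
    have := sub_eq_zero.mp hzero
    exact this
  have : Multiset.map (DS.Q D) (Multiset.map x Finset.univ.val)
      = Multiset.map (DS.Q D) (Multiset.map y Finset.univ.val) := by
    rw [Multiset.map_map, Multiset.map_map]
    exact hMeq
  exact Multiset.map_injective (DS.Q_inj D) this


open Filter Topology

/-- Main theorem (LE architecture, upper bound): every continuous
permutation-invariant `f : ℝ^{N×D} → ℝ` admits a DeepSets representation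
`f(X) = ρ(∑_n φ(x^{(n)}))` where `φ(x) = (exp⟨v_1,x⟩, …, exp⟨v_L,x⟩)` is a
linear + exponential embedding with latent dimension `L ≤ N⁴D²`, and `ρ` is
continuous on the range of the sum-pooling `Φ`. -/
theorem deepsets_LE_upper_bound (N D : ℕ) (hN : 1 ≤ N) (hD : 1 ≤ D)
    (f : (Fin N → Fin D → ℝ) → ℝ) (hf : Continuous f)
    (hinv : ∀ (σ : Equiv.Perm (Fin N)) (X : Fin N → Fin D → ℝ),
      f (fun n => X (σ n)) = f X) :
    ∃ L : ℕ, L ≤ N ^ 4 * D ^ 2 ∧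
      ∃ (v : Fin L → Fin D → ℝ) (ρ : (Fin L → ℝ) → ℝ),
        (∀ X : Fin N → Fin D → ℝ,
          f X = ρ (fun l => ∑ n, Real.exp (∑ d, v l d * X n d))) ∧
        ContinuousOn ρ
          (Set.range (fun X : Fin N → Fin D → ℝ =>
            fun l => ∑ n, Real.exp (∑ d, v l d * X n d))) := by
  classical
  set m : ℕ := N * (D - 1) + 1 with hm
  have hDm : D ≤ m := by
    have : D - 1 ≤ N * (D - 1) := Nat.le_mul_of_pos_left _ hN
    omega
  have hL : N * m ≤ N ^ 4 * D ^ 2 := by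
    obtain ⟨D', rfl⟩ : ∃ D', D = D' + 1 := ⟨D - 1, by omega⟩
    have h1 : m ≤ N * (D' + 1) := by
      have : m = N * D' + 1 := by simp [hm]
      nlinarith
    have h2 : N * m ≤ N * (N * (D' + 1)) := Nat.mul_le_mul_left _ h1
    have e1 : N ^ 2 ≤ N ^ 4 := Nat.pow_le_pow_right hN (by norm_num)
    have e2 : (D' + 1) ≤ (D' + 1) ^ 2 := by nlinarith
    have h3 : N * (N * (D' + 1)) ≤ N ^ 4 * (D' + 1) ^ 2 := by
      calc N * (N * (D' + 1)) = N ^ 2 * (D' + 1) := by ring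
        _ ≤ N ^ 4 * (D' + 1) ^ 2 := Nat.mul_le_mul e1 e2
    omega
  let e : Fin N × Fin m ≃ Fin (N * m) := finProdFinEquiv
  let v : Fin (N * m) → Fin D → ℝ := fun l d =>
    ((((e.symm l).1 : ℕ) + 1 : ℕ) : ℝ) * (((e.symm l).2 : ℕ) : ℝ) ^ (d : ℕ)
  set P : (Fin N → Fin D → ℝ) → Fin m → Fin N → ℝ :=
    fun X j n => ∑ d : Fin D, X n d * ((j : ℕ) : ℝ) ^ (d : ℕ) with hP
  set Φ : (Fin N → Fin D → ℝ) → Fin (N * m) → ℝ :=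
    fun X l => ∑ n, Real.exp (∑ d, v l d * X n d) with hΦ
  set u : (Fin N → Fin D → ℝ) → Fin N → Fin m → ℝ :=
    fun X n j => Real.exp (P X j n) with hu
  have hΦcoord : ∀ X (k : Fin N) (j : Fin m),
      Φ X (e (k, j)) = ∑ n, u X n j ^ ((k : ℕ) + 1) := by
    intro X k j
    apply Finset.sum_congr rfl
    intro n _
    have hv : ∀ d : Fin D, v (e (k, j)) d =
        (((k : ℕ) + 1 : ℕ) : ℝ) * ((j : ℕ) : ℝ) ^ (d : ℕ) := by
      intro d
      show ((((e.symm (e (k, j))).1 : ℕ) + 1 : ℕ) : ℝ)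
          * (((e.symm (e (k, j))).2 : ℕ) : ℝ) ^ (d : ℕ) = _
      rw [Equiv.symm_apply_apply]
    have hsum : (∑ d, v (e (k, j)) d * X n d)
        = (((k : ℕ) + 1 : ℕ) : ℝ) * P X j n := by
      rw [hP, Finset.mul_sum]
      apply Finset.sum_congr rfl
      intro d _
      rw [hv d]; ring
    rw [hsum, Real.exp_nat_mul, hu]
  -- injectivity on multisets of rows
  have hinj : ∀ X Y, Φ X = Φ Y →
      Multiset.map X Finset.univ.val = Multiset.map Y Finset.univ.val := by
    intro X Y h
    apply DS.proj_multiset_eq N D X Y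
    intro j
    have hu_eq : Multiset.map (fun n => u X n j) Finset.univ.val
        = Multiset.map (fun n => u Y n j) Finset.univ.val := by
      apply DS.multiset_eq_of_psum_eq
      intro k hk1 hkN
      have hkk : k - 1 < N := by omega
      have h1 := congrFun h (e (⟨k - 1, hkk⟩, j))
      rw [hΦcoord X ⟨k - 1, hkk⟩ j, hΦcoord Y ⟨k - 1, hkk⟩ j] at h1
      have : k - 1 + 1 = k := by omega
      rw [this] at h1
      exact h1
    have := congrArg (Multiset.map Real.log) hu_eq
    rw [Multiset.map_map, Multiset.map_map] at this
    have hx : Multiset.map (Real.log ∘ fun n => u X n j) Finset.univ.val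
        = Multiset.map (fun n => P X j n) Finset.univ.val :=
      Multiset.map_congr rfl (fun n _ => Real.log_exp _)
    have hy : Multiset.map (Real.log ∘ fun n => u Y n j) Finset.univ.val
        = Multiset.map (fun n => P Y j n) Finset.univ.val :=
      Multiset.map_congr rfl (fun n _ => Real.log_exp _)
    rw [hx, hy] at this
    exact this
  have hfeq : ∀ X Y, Φ X = Φ Y → f X = f Y := by
    intro X Y h
    obtain ⟨σ, hσ⟩ := DS.exists_perm_of_map_eq X Y (hinj X Y h)
    have : X = fun n => Y (σ n) := funext hσ
    rw [this, hinv σ Y]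
  let ρ : (Fin (N * m) → ℝ) → ℝ := fun z => if h : z ∈ Set.range Φ then f h.choose else 0
  have hρ : ∀ X, ρ (Φ X) = f X := by
    intro X
    have hmem : Φ X ∈ Set.range Φ := ⟨X, rfl⟩
    simp only [ρ, dif_pos hmem]
    exact hfeq _ _ hmem.choose_spec
  refine ⟨N * m, hL, v, ρ, fun X => (hρ X).symm, ?_⟩
  show ContinuousOn ρ (Set.range Φ)
  -- vandermonde recovery
  set V : Matrix (Fin D) (Fin D) ℝ := Matrix.vandermonde (fun i : Fin D => ((i : ℕ) : ℝ)) with hV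
  have hVdet : IsUnit V.det := by
    rw [isUnit_iff_ne_zero, hV, Ne, Matrix.det_vandermonde_eq_zero_iff]
    intro h
    obtain ⟨i, j, hij, hne⟩ := h
    exact hne (Fin.val_injective (Nat.cast_injective hij))
  set recover : (Fin m → ℝ) → Fin D → ℝ :=
    fun pr => (V⁻¹).mulVec (fun i : Fin D => pr (Fin.castLE hDm i)) with hrec
  have hrecover : ∀ (X : Fin N → Fin D → ℝ) (n : Fin N),
      recover (fun j => P X j n) = X n := by
    intro X n
    have h1 : (fun i : Fin D => P X (Fin.castLE hDm i) n) = V.mulVec (X n) := by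
      funext i
      rw [hP]
      simp only [Matrix.mulVec, dotProduct, hV, Matrix.vandermonde]
      apply Finset.sum_congr rfl
      intro d _
      simp [Fin.castLE]
      ring
    rw [hrec]
    simp only []
    rw [h1, Matrix.mulVec_mulVec, Matrix.nonsing_inv_mul V hVdet, Matrix.one_mulVec]
  -- continuity
  intro z₀ hz₀
  obtain ⟨X₀, hX₀⟩ := hz₀
  have hρz₀ : ρ z₀ = f X₀ := by rw [← hX₀, hρ]
  show Tendsto ρ (𝓝[Set.range Φ] z₀) (𝓝 (ρ z₀))
  apply Filter.tendsto_of_seq_tendsto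
  intro w hw
  have hwz : Tendsto w atTop (𝓝 z₀) := hw.mono_right nhdsWithin_le_nhds
  have hwmem : ∀ᶠ i in atTop, w i ∈ Set.range Φ := hw.eventually_mem self_mem_nhdsWithin
  apply Filter.tendsto_of_subseq_tendsto
  intro ns hns
  have hns' : ∀ᶠ i in atTop, w (ns i) ∈ Set.range Φ := hns.eventually hwmem
  obtain ⟨i₁, hi₁⟩ := eventually_atTop.mp hns'
  have hYex : ∀ i : ℕ, w (ns (i + i₁)) ∈ Set.range Φ := fun i => hi₁ (i + i₁) (Nat.le_add_left _ _)
  set Y : ℕ → (Fin N → Fin D → ℝ) := fun i => (hYex i).choose with hY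
  have hYspec : ∀ i, Φ (Y i) = w (ns (i + i₁)) := fun i => (hYex i).choose_spec
  have hΦY : Tendsto (fun i => Φ (Y i)) atTop (𝓝 z₀) := by
    have h1 : Tendsto (fun i : ℕ => i + i₁) atTop atTop := tendsto_add_atTop_nat i₁
    have h2 : Tendsto (fun i => w (ns (i + i₁))) atTop (𝓝 z₀) := hwz.comp (hns.comp h1)
    simpa only [hYspec] using h2
  -- bound on U
  set k₀ : Fin N := ⟨0, hN⟩ with hk₀
  have hBj : ∀ j : Fin m, ∃ B : ℝ, ∀ i, Φ (Y i) (e (k₀, j)) ≤ B := by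
    intro j
    have h1 : Tendsto (fun i => Φ (Y i) (e (k₀, j))) atTop (𝓝 (z₀ (e (k₀, j)))) :=
      (tendsto_pi_nhds.mp hΦY) _
    obtain ⟨B, hB⟩ := h1.bddAbove_range
    exact ⟨B, fun i => hB ⟨i, rfl⟩⟩
  choose B hB using hBj
  set U : ℕ → (Fin N → Fin m → ℝ) := fun i n j => u (Y i) n j with hU
  have hUmem : ∀ i, U i ∈ Set.Icc (0 : Fin N → Fin m → ℝ) (fun _ j => B j) := by
    intro i
    constructor
    · intro n j
      exact le_of_lt (Real.exp_pos _)
    · intro n j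
      have h1 : u (Y i) n j ≤ ∑ n', u (Y i) n' j ^ ((k₀ : ℕ) + 1) := by
        have : ∀ n' : Fin N, (0:ℝ) ≤ u (Y i) n' j ^ ((k₀ : ℕ) + 1) :=
          fun n' => pow_nonneg (le_of_lt (Real.exp_pos _)) _
        have h2 := Finset.single_le_sum (f := fun n' => u (Y i) n' j ^ ((k₀ : ℕ) + 1))
          (fun n' _ => this n') (Finset.mem_univ n)
        simpa [hk₀] using h2
      exact le_trans h1 (by rw [← hΦcoord]; exact hB j i)
  obtain ⟨Ustar, hUstarmem, φ, hφmono, hUφ⟩ := (isCompact_Icc).tendsto_subseq hUmem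
  -- power sums at the limit
  have hpow : ∀ (k : ℕ), 1 ≤ k → k ≤ N → ∀ j : Fin m,
      ∑ n, Ustar n j ^ k = ∑ n, u X₀ n j ^ k := by
    intro k hk1 hkN j
    have hkk : k - 1 < N := by omega
    set kk : Fin N := ⟨k - 1, hkk⟩ with hkkdef
    have hkeq : (kk : ℕ) + 1 = k := by simp [hkkdef]; omega
    have h1 : Tendsto (fun i => Φ (Y (φ i)) (e (kk, j))) atTop (𝓝 (z₀ (e (kk, j)))) :=
      (tendsto_pi_nhds.mp (hΦY.comp hφmono.tendsto_atTop)) _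
    have h2 : Tendsto (fun i => ∑ n, U (φ i) n j ^ ((kk : ℕ) + 1)) atTop
        (𝓝 (∑ n, Ustar n j ^ ((kk : ℕ) + 1))) := by
      apply tendsto_finset_sum
      intro n _
      exact ((tendsto_pi_nhds.mp ((tendsto_pi_nhds.mp hUφ) n)) j).pow _
    have h3 : (fun i => Φ (Y (φ i)) (e (kk, j))) = fun i => ∑ n, U (φ i) n j ^ ((kk : ℕ) + 1) := by
      funext i
      exact hΦcoord (Y (φ i)) kk j
    rw [h3] at h1
    have h4 := tendsto_nhds_unique h2 h1
    have h5 : z₀ (e (kk, j)) = ∑ n, u X₀ n j ^ ((kk : ℕ) + 1) := by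
      rw [← hX₀]; exact hΦcoord X₀ kk j
    rw [← hkeq]
    rw [h4, h5]
  have hUpos : ∀ n j, 0 < Ustar n j := by
    intro n j
    have hmeq : Multiset.map (fun n => Ustar n j) Finset.univ.val
        = Multiset.map (fun n => u X₀ n j) Finset.univ.val :=
      DS.multiset_eq_of_psum_eq N _ _ (fun k h1 h2 => hpow k h1 h2 j)
    have hmem : Ustar n j ∈ Multiset.map (fun n => u X₀ n j) Finset.univ.val := by
      rw [← hmeq]
      exact Multiset.mem_map_of_mem _ (Finset.mem_univ_val n)
    obtain ⟨n', -, hn'⟩ := Multiset.mem_map.mp hmem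
    rw [← hn']
    exact Real.exp_pos _
  -- the limit point
  set Xstar : Fin N → Fin D → ℝ := fun n => recover (fun j => Real.log (Ustar n j)) with hXstar
  have hYφ : Tendsto (fun i => Y (φ i)) atTop (𝓝 Xstar) := by
    rw [tendsto_pi_nhds]
    intro n
    have hYrec : ∀ i, Y (φ i) n = recover (fun j => Real.log (U (φ i) n j)) := by
      intro i
      have : (fun j => Real.log (U (φ i) n j)) = fun j => P (Y (φ i)) j n := by
        funext j
        simp only [hU, hu, Real.log_exp]
      rw [this, hrecover]
    have h1 : Tendsto (fun i => (fun j => Real.log (U (φ i) n j))) atTop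
        (𝓝 (fun j => Real.log (Ustar n j))) := by
      rw [tendsto_pi_nhds]
      intro j
      have h2 : Tendsto (fun i => U (φ i) n j) atTop (𝓝 (Ustar n j)) :=
        (tendsto_pi_nhds.mp ((tendsto_pi_nhds.mp hUφ) n)) j
      exact ((Real.continuousAt_log (ne_of_gt (hUpos n j))).tendsto).comp h2
    have h3 : Continuous (recover) := by
      rw [hrec]
      apply continuous_pi
      intro d
      simp only [Matrix.mulVec, dotProduct]
      apply continuous_finset_sum
      intro i' _
      exact continuous_const.mul ((continuous_apply _))
    have h4 : Tendsto (fun i => recover (fun j => Real.log (U (φ i) n j))) atTop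
        (𝓝 (recover (fun j => Real.log (Ustar n j)))) := (h3.tendsto _).comp h1
    rw [tendsto_pi_nhds] at h4
    rw [tendsto_pi_nhds]
    intro d
    have h6 : (fun i => Y (φ i) n d)
        = fun i => recover (fun j => Real.log (U (φ i) n j)) d :=
      funext fun i => by rw [hYrec i]
    rw [h6]
    exact h4 d
  have hΦcont : Continuous Φ := by
    rw [hΦ]
    apply continuous_pi
    intro l
    apply continuous_finset_sum
    intro n _
    apply Real.continuous_exp.comp
    apply continuous_finset_sum
    intro d _
    exact continuous_const.mul ((continuous_apply d).comp (continuous_apply n))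
  have hΦXstar : Φ Xstar = z₀ := by
    have h1 : Tendsto (fun i => Φ (Y (φ i))) atTop (𝓝 (Φ Xstar)) :=
      (hΦcont.tendsto _).comp hYφ
    have h2 : Tendsto (fun i => Φ (Y (φ i))) atTop (𝓝 z₀) := hΦY.comp hφmono.tendsto_atTop
    exact tendsto_nhds_unique h1 h2
  have hfXstar : f Xstar = f X₀ := hfeq _ _ (by rw [hΦXstar, ← hX₀])
  refine ⟨fun n => φ n + i₁, ?_⟩
  have heq : (fun n => (ρ ∘ w) (ns (φ n + i₁))) = fun n => f (Y (φ n)) := by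
    funext n
    have h1 : w (ns (φ n + i₁)) = Φ (Y (φ n)) := (hYspec (φ n)).symm
    simp only [Function.comp_apply, h1, hρ]
  rw [heq, hρz₀, ← hfXstar]
  exact (hf.tendsto _).comp hYφ
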